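/- arXiv:2006.08354 — 2 statements merged into one kernel-verified Lean document; each statement's English description precedes it below -/
import Mathlib

section
/- Let H be a Hilbert C*-module over a C*-algebra A and let T, S ∈ End*_A(H) with R(S) closed. Then the following are equivalent: (i) R(T) ⊆ R(S); (ii) TT* ≤ λ²SS* for some λ ≥ 0; (iii) there exists Q ∈ End*_A(H) with T = SQ. -/
/-- The class `CStarModule` as it stood in Mathlib of December 2024: a right Hilbert
`A`-module (action of `Aᵐᵒᵖ`), with inner product right `A`-linear in the second argument. -/
class CStarModuleOld (A E : Type*) [NonUnitalSemiring A] [StarRing A] [Module ℂ A]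
    [AddCommGroup E] [Module ℂ E] [PartialOrder A] [SMul Aᵐᵒᵖ E] [Norm A] [Norm E]
    extends Inner A E where
  inner_add_right {x} {y} {z} : inner x (y + z) = inner x y + inner x z
  inner_self_nonneg {x} : 0 ≤ inner x x
  inner_self {x} : inner x x = 0 ↔ x = 0
  inner_op_smul_right {a : A} {x y : E} : inner x (MulOpposite.op a • y) = inner x y * a
  inner_smul_right_complex {z : ℂ} {x} {y} : inner x (z • y) = z • inner x y
  star_inner x y : star (inner x y) = inner y x
  norm_eq_sqrt_norm_inner_self x : ‖x‖ = √‖inner x x‖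

namespace CStarModuleOld

variable {A : Type*} [CStarAlgebra A] [PartialOrder A] [StarOrderedRing A]
  {E : Type*} [NormedAddCommGroup E] [NormedSpace ℂ E] [SMul Aᵐᵒᵖ E]
  [CStarModuleOld A E]

local notation "⟪" x ", " y "⟫" => inner (𝕜 := A) x y

lemma inner_add_left {x y z : E} : ⟪x + y, z⟫ = ⟪x, z⟫ + ⟪y, z⟫ := by
  rw [← star_star (r := ⟪x + y, z⟫)]
  simp only [star_inner, inner_add_right, star_add]

lemma inner_op_smul_left {a : A} {x y : E} : ⟪MulOpposite.op a • x, y⟫ = star a * ⟪x, y⟫ := by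
  rw [← star_star (r := ⟪MulOpposite.op a • x, y⟫)]
  simp only [star_inner, inner_op_smul_right, star_mul]

lemma inner_smul_left_complex {z : ℂ} {x y : E} : ⟪z • x, y⟫ = star z • ⟪x, y⟫ := by
  rw [← star_star (r := ⟪z • x, y⟫)]
  simp only [star_inner, inner_smul_right_complex, star_smul]

lemma inner_smul_left_real {z : ℝ} {x y : E} : ⟪z • x, y⟫ = z • ⟪x, y⟫ := by
  have h₁ : z • x = (z : ℂ) • x := by simp
  rw [h₁, inner_smul_left_complex]
  simp

lemma inner_smul_right_real {z : ℝ} {x y : E} : ⟪x, z • y⟫ = z • ⟪x, y⟫ := by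
  have h₁ : z • y = (z : ℂ) • y := by simp
  rw [h₁, inner_smul_right_complex]
  simp

/-- The inner product as a sesquilinear map. -/
def innerₛₗ : E →ₗ⋆[ℂ] E →ₗ[ℂ] A where
  toFun x := { toFun := fun y => ⟪x, y⟫
               map_add' := fun z y => inner_add_right
               map_smul' := fun z y => by simp [inner_smul_right_complex] }
  map_add' z y := by ext; simp [inner_add_left]
  map_smul' z y := by ext; simp [inner_smul_left_complex]

lemma innerₛₗ_apply {x y : E} : innerₛₗ (A := A) x y = ⟪x, y⟫ := rfl

lemma inner_zero_right {x : E} : ⟪x, 0⟫ = 0 := map_zero (innerₛₗ (A := A) x)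

lemma inner_zero_left {x : E} : ⟪0, x⟫ = 0 := by
  show innerₛₗ (A := A) 0 x = 0
  rw [map_zero]; rfl

lemma inner_sub_right {x y z : E} : ⟪x, y - z⟫ = ⟪x, y⟫ - ⟪x, z⟫ :=
  map_sub (innerₛₗ (A := A) x) y z

lemma inner_sub_left {x y z : E} : ⟪x - y, z⟫ = ⟪x, z⟫ - ⟪y, z⟫ := by
  show innerₛₗ (A := A) (x - y) z = innerₛₗ (A := A) x z - innerₛₗ (A := A) y z
  rw [map_sub]; rfl

lemma norm_sq_eq {x : E} : ‖x‖ ^ 2 = ‖⟪x, x⟫‖ := by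
  rw [norm_eq_sqrt_norm_inner_self (A := A) x, Real.sq_sqrt (norm_nonneg _)]

lemma inner_mul_inner_swap_le {x y : E} : ⟪y, x⟫ * ⟪x, y⟫ ≤ ‖x‖ ^ 2 • ⟪y, y⟫ := by
  rcases eq_or_ne x 0 with h | h
  · subst h; simp [inner_zero_left, inner_zero_right]
  · have h₁ : ∀ (a : A),
        (0 : A) ≤ ‖x‖ ^ 2 • (star a * a) - ‖x‖ ^ 2 • (star a * ⟪x, y⟫)
                  - ‖x‖ ^ 2 • (⟪y, x⟫ * a) + ‖x‖ ^ 2 • (‖x‖ ^ 2 • ⟪y, y⟫) := fun a => by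
      calc (0 : A) ≤ ⟪MulOpposite.op a • x - ‖x‖ ^ 2 • y, MulOpposite.op a • x - ‖x‖ ^ 2 • y⟫ := by
                      exact inner_self_nonneg
            _ = star a * ⟪x, x⟫ * a - ‖x‖ ^ 2 • (star a * ⟪x, y⟫)
                  - ‖x‖ ^ 2 • (⟪y, x⟫ * a) + ‖x‖ ^ 2 • (‖x‖ ^ 2 • ⟪y, y⟫) := by
                      simp only [inner_sub_right, inner_op_smul_right, inner_sub_left,
                        inner_op_smul_left, inner_smul_left_real, mul_sub, sub_mul, mul_smul_comm,
                        smul_mul_assoc, inner_smul_right_real, smul_sub, mul_assoc]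
                      abel
            _ ≤ ‖x‖ ^ 2 • (star a * a) - ‖x‖ ^ 2 • (star a * ⟪x, y⟫)
                  - ‖x‖ ^ 2 • (⟪y, x⟫ * a) + ‖x‖ ^ 2 • (‖x‖ ^ 2 • ⟪y, y⟫) := by
                      gcongr
                      calc _ ≤ ‖⟪x, x⟫‖ • (star a * a) :=
                          CStarAlgebra.star_left_conjugate_le_norm_smul (star_inner x x)
                        _ = ‖x‖ ^ 2 • (star a * a) := by rw [norm_sq_eq (A := A)]
    specialize h₁ ⟪x, y⟫
    simp only [star_inner, sub_self, zero_sub, le_neg_add_iff_add_le, add_zero] at h₁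
    have hx : 0 < ‖x‖ := norm_pos_iff.mpr h
    rwa [smul_le_smul_iff_of_pos_left (pow_pos hx _)] at h₁

variable (E) in
lemma norm_inner_le {x y : E} : ‖⟪x, y⟫‖ ≤ ‖x‖ * ‖y‖ := by
  have := calc ‖⟪x, y⟫‖ ^ 2 = ‖⟪y, x⟫ * ⟪x, y⟫‖ := by
                rw [← star_inner x, CStarRing.norm_star_mul_self, pow_two]
    _ ≤ ‖‖x‖ ^ 2 • ⟪y, y⟫‖ := by
                refine CStarAlgebra.norm_le_norm_of_nonneg_of_le ?_ inner_mul_inner_swap_le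
                rw [← star_inner x]
                exact star_mul_self_nonneg ⟪x, y⟫
    _ = ‖x‖ ^ 2 * ‖⟪y, y⟫‖ := by simp [norm_smul]
    _ = ‖x‖ ^ 2 * ‖y‖ ^ 2 := by rw [norm_sq_eq (A := A) (x := y)]
    _ = (‖x‖ * ‖y‖) ^ 2 := by simp only [mul_pow]
  refine (pow_le_pow_iff_left₀ (norm_nonneg _) ?_ (by simp)).mp this
  positivity

end CStarModuleOld

set_option linter.unusedSectionVars false
set_option synthInstance.maxHeartbeats 1000000
set_option maxHeartbeats 2000000
set_option linter.unusedVariables false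

open CStarModuleOld

namespace Stmt16Aux

variable {A : Type*} [CStarAlgebra A] [PartialOrder A] [StarOrderedRing A]
  {H : Type*} [NormedAddCommGroup H] [NormedSpace ℂ H] [SMul Aᵐᵒᵖ H]
  [CStarModuleOld A H] [CompleteSpace H]

local notation "⟪" x ", " y "⟫" => inner (𝕜 := A) x y

/-- `S` is an adjoint of `T`. -/
def IsAdj (T S : H →L[ℂ] H) : Prop := ∀ x y : H, ⟪T x, y⟫ = ⟪x, S y⟫

lemma eq_zero_of_forall_inner (x : H) (h : ∀ y : H, ⟪y, x⟫ = 0) : x = 0 := by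
  have := h x
  rwa [inner_self] at this

lemma clm_ext_inner {a b : H →L[ℂ] H} (h : ∀ x y : H, ⟪x, a y⟫ = ⟪x, b y⟫) : a = b := by
  ext y
  have : ∀ x : H, ⟪x, a y - b y⟫ = 0 := by
    intro x
    rw [CStarModuleOld.inner_sub_right, h, sub_self]
  have := eq_zero_of_forall_inner _ this
  rw [sub_eq_zero] at this
  simpa using this

namespace IsAdj

lemma symm {T S : H →L[ℂ] H} (h : IsAdj (A := A) T S) : IsAdj (A := A) S T := by
  intro x y
  have := h y x
  calc ⟪S x, y⟫ = star ⟪y, S x⟫ := by rw [star_inner]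
    _ = star ⟪T y, x⟫ := by rw [this]
    _ = ⟪x, T y⟫ := by rw [star_inner]

lemma unique {T S S' : H →L[ℂ] H} (h : IsAdj (A := A) T S) (h' : IsAdj (A := A) T S') : S = S' :=
  clm_ext_inner fun x y => by rw [← h x y, h' x y]

lemma norm_apply_le {T S : H →L[ℂ] H} (h : IsAdj (A := A) T S) (y : H) : ‖S y‖ ≤ ‖T‖ * ‖y‖ := by
  rcases eq_or_lt_of_le (norm_nonneg (S y)) with h0 | h0
  · rw [← h0]; positivity
  · have key : ‖S y‖ ^ 2 ≤ ‖T‖ * ‖y‖ * ‖S y‖ := by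
      calc ‖S y‖ ^ 2 = ‖⟪S y, S y⟫‖ := norm_sq_eq
        _ = ‖⟪T (S y), y⟫‖ := by rw [h (S y) y]
        _ ≤ ‖T (S y)‖ * ‖y‖ := norm_inner_le H
        _ ≤ (‖T‖ * ‖S y‖) * ‖y‖ := by
            gcongr; exact T.le_opNorm _
        _ = ‖T‖ * ‖y‖ * ‖S y‖ := by ring
    nlinarith [key]

lemma opNorm_le {T S : H →L[ℂ] H} (h : IsAdj (A := A) T S) : ‖S‖ ≤ ‖T‖ :=
  S.opNorm_le_bound (by positivity) h.norm_apply_le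

lemma opNorm_eq {T S : H →L[ℂ] H} (h : IsAdj (A := A) T S) : ‖S‖ = ‖T‖ :=
  le_antisymm h.opNorm_le h.symm.opNorm_le

lemma one : IsAdj (A := A) (1 : H →L[ℂ] H) 1 := fun x y => rfl

lemma mul {T S T' S' : H →L[ℂ] H} (h : IsAdj (A := A) T S) (h' : IsAdj (A := A) T' S') :
    IsAdj (A := A) (T * T') (S' * S) := by
  intro x y
  calc ⟪(T * T') x, y⟫ = ⟪T' x, S y⟫ := h (T' x) y
    _ = ⟪x, S' (S y)⟫ := h' x (S y)
    _ = ⟪x, (S' * S) y⟫ := rfl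

lemma add {T S T' S' : H →L[ℂ] H} (h : IsAdj (A := A) T S) (h' : IsAdj (A := A) T' S') :
    IsAdj (A := A) (T + T') (S + S') := by
  intro x y
  simp only [ContinuousLinearMap.add_apply, CStarModuleOld.inner_add_left, CStarModuleOld.inner_add_right, h x y, h' x y]

lemma sub {T S T' S' : H →L[ℂ] H} (h : IsAdj (A := A) T S) (h' : IsAdj (A := A) T' S') :
    IsAdj (A := A) (T - T') (S - S') := by
  intro x y
  simp only [ContinuousLinearMap.sub_apply, CStarModuleOld.inner_sub_left, CStarModuleOld.inner_sub_right, h x y, h' x y]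

lemma smul {T S : H →L[ℂ] H} (c : ℂ) (h : IsAdj (A := A) T S) :
    IsAdj (A := A) (c • T) ((starRingEnd ℂ c) • S) := by
  intro x y
  simp only [ContinuousLinearMap.smul_apply, inner_smul_left_complex, inner_smul_right_complex,
    h x y]
  simp

end IsAdj

variable (A H) in
/-- The subalgebra of adjointable operators. -/
def adjAlg : Subalgebra ℂ (H →L[ℂ] H) where
  carrier := {T | ∃ S, IsAdj (A := A) T S}
  mul_mem' := by
    rintro a b ⟨S, hS⟩ ⟨S', hS'⟩
    exact ⟨S' * S, hS.mul hS'⟩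
  add_mem' := by
    rintro a b ⟨S, hS⟩ ⟨S', hS'⟩
    exact ⟨S + S', hS.add hS'⟩
  algebraMap_mem' := by
    intro c
    refine ⟨(starRingEnd ℂ c) • 1, ?_⟩
    have h := IsAdj.smul (H := H) (A := A) c IsAdj.one
    intro x y
    have := h x y
    simpa [Algebra.algebraMap_eq_smul_one] using this

lemma mem_adjAlg_iff {T : H →L[ℂ] H} : T ∈ adjAlg A H ↔ ∃ S, IsAdj (A := A) T S := Iff.rfl


section BAlg

/-- The adjoint of an adjointable operator, via choice. -/
noncomputable def adjOf (a : adjAlg A H) : H →L[ℂ] H := a.2.choose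

lemma isAdj_adjOf (a : adjAlg A H) : IsAdj (A := A) (a : H →L[ℂ] H) (adjOf a) := a.2.choose_spec

lemma adjOf_eq {a : adjAlg A H} {S : H →L[ℂ] H} (h : IsAdj (A := A) (a : H →L[ℂ] H) S) :
    adjOf a = S := (isAdj_adjOf a).unique h

lemma adjOf_mem (a : adjAlg A H) : adjOf a ∈ adjAlg A H :=
  ⟨(a : H →L[ℂ] H), (isAdj_adjOf a).symm⟩

noncomputable instance : Star (adjAlg A H) where
  star a := ⟨adjOf a, adjOf_mem a⟩

lemma coe_star (a : adjAlg A H) : ((star a : adjAlg A H) : H →L[ℂ] H) = adjOf a := rfl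

lemma isAdj_star (a : adjAlg A H) : IsAdj (A := A) (a : H →L[ℂ] H) ((star a : adjAlg A H) : H →L[ℂ] H) :=
  isAdj_adjOf a

lemma star_eq {a b : adjAlg A H} (h : IsAdj (A := A) (a : H →L[ℂ] H) (b : H →L[ℂ] H)) : star a = b := by
  apply Subtype.ext
  rw [coe_star]
  exact adjOf_eq h

noncomputable instance : StarRing (adjAlg A H) where
  star_involutive a := star_eq (isAdj_star a).symm
  star_mul a b := star_eq ((isAdj_star a).mul (isAdj_star b))
  star_add a b := by
    apply star_eq
    have := (isAdj_star a).add (isAdj_star b)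
    intro x y
    have h2 := this x y
    simpa using h2

noncomputable instance : StarModule ℂ (adjAlg A H) where
  star_smul c a := by
    apply star_eq
    have := (isAdj_star a).smul c
    intro x y
    have h2 := this x y
    simpa using h2

lemma norm_coe (a : adjAlg A H) : ‖a‖ = ‖(a : H →L[ℂ] H)‖ := rfl

lemma coe_mul_apply (a b : adjAlg A H) (x : H) :
    ((a * b : adjAlg A H) : H →L[ℂ] H) x = (a : H →L[ℂ] H) ((b : H →L[ℂ] H) x) := rfl

lemma norm_star_eq (a : adjAlg A H) : ‖star a‖ = ‖a‖ := by
  rw [norm_coe, norm_coe]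
  exact (isAdj_star a).opNorm_eq

instance : CStarRing (adjAlg A H) where
  norm_mul_self_le a := by
    have key : ∀ x : H, ‖(a : H →L[ℂ] H) x‖ ^ 2 ≤ ‖star a * a‖ * ‖x‖ ^ 2 := by
      intro x
      calc ‖(a : H →L[ℂ] H) x‖ ^ 2 = ‖⟪(a : H →L[ℂ] H) x, (a : H →L[ℂ] H) x⟫‖ := norm_sq_eq
        _ = ‖⟪x, ((star a * a : adjAlg A H) : H →L[ℂ] H) x⟫‖ := by
            exact congrArg norm ((isAdj_star a) x ((a : H →L[ℂ] H) x))
        _ ≤ ‖x‖ * ‖((star a * a : adjAlg A H) : H →L[ℂ] H) x‖ := norm_inner_le H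
        _ ≤ ‖x‖ * (‖star a * a‖ * ‖x‖) := by
            gcongr
            exact ((star a * a : adjAlg A H) : H →L[ℂ] H).le_opNorm x
        _ = ‖star a * a‖ * ‖x‖ ^ 2 := by ring
    have h1 : ‖a‖ ≤ Real.sqrt ‖star a * a‖ := by
      rw [norm_coe]
      apply ContinuousLinearMap.opNorm_le_bound _ (Real.sqrt_nonneg _)
      intro x
      have := key x
      have h2 : ‖(a : H →L[ℂ] H) x‖ ≤ Real.sqrt (‖star a * a‖ * ‖x‖ ^ 2) := by
        rw [← Real.sqrt_sq (norm_nonneg _)]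
        exact Real.sqrt_le_sqrt this
      rwa [Real.sqrt_mul (norm_nonneg (star a * a)), Real.sqrt_sq (norm_nonneg _)] at h2
    calc ‖a‖ * ‖a‖ ≤ Real.sqrt ‖star a * a‖ * Real.sqrt ‖star a * a‖ := by
          apply mul_le_mul h1 h1 (norm_nonneg _) (Real.sqrt_nonneg _)
      _ = ‖star a * a‖ := Real.mul_self_sqrt (norm_nonneg _)

lemma continuous_inner_right (y : H) : Continuous (fun x : H => ⟪y, x⟫) := by
  have : ∀ x : H, ‖innerₛₗ (A := A) y x‖ ≤ ‖y‖ * ‖x‖ := fun x => norm_inner_le H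
  exact ((innerₛₗ (A := A) y).mkContinuous ‖y‖ this).continuous

lemma continuous_inner_left (y : H) : Continuous (fun x : H => ⟪x, y⟫) := by
  have h : (fun x : H => ⟪x, y⟫) = (fun x : H => star ⟪y, x⟫) := by
    ext x; rw [star_inner]
  rw [h]
  exact continuous_star.comp (continuous_inner_right y)

lemma isClosed_adjAlg : IsClosed ((adjAlg A H : Set (H →L[ℂ] H))) := by
  apply IsSeqClosed.isClosed
  intro Tn T hmem hlim
  -- adjoints
  set Sn : ℕ → (H →L[ℂ] H) := fun n => (hmem n).choose with hSn
  have hadj : ∀ n, IsAdj (A := A) (Tn n) (Sn n) := fun n => (hmem n).choose_spec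
  have hcauchy : CauchySeq Sn := by
    rw [Metric.cauchySeq_iff]
    have := hlim.cauchySeq
    rw [Metric.cauchySeq_iff] at this
    intro ε hε
    obtain ⟨N, hN⟩ := this ε hε
    refine ⟨N, fun m hm n hn => ?_⟩
    have hd : dist (Sn m) (Sn n) = dist (Tn m) (Tn n) := by
      rw [dist_eq_norm, dist_eq_norm]
      have : IsAdj (A := A) (Tn m - Tn n) (Sn m - Sn n) := (hadj m).sub (hadj n)
      exact this.opNorm_eq
    rw [hd]
    exact hN m hm n hn
  obtain ⟨R, hR⟩ := cauchySeq_tendsto_of_complete hcauchy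
  refine ⟨R, ?_⟩
  intro x y
  have h1 : Filter.Tendsto (fun n => ⟪Tn n x, y⟫) Filter.atTop (nhds ⟪T x, y⟫) := by
    apply (continuous_inner_left y).continuousAt.tendsto.comp
    exact (ContinuousLinearMap.apply ℂ H x).continuous.continuousAt.tendsto.comp hlim
  have h2 : Filter.Tendsto (fun n => ⟪x, Sn n y⟫) Filter.atTop (nhds ⟪x, R y⟫) := by
    apply (continuous_inner_right x).continuousAt.tendsto.comp
    exact (ContinuousLinearMap.apply ℂ H y).continuous.continuousAt.tendsto.comp hR
  have heq : (fun n => ⟪Tn n x, y⟫) = (fun n => ⟪x, Sn n y⟫) := by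
    ext n; exact (hadj n) x y
  rw [heq] at h1
  exact tendsto_nhds_unique h1 h2

instance : CompleteSpace (adjAlg A H) := (isClosed_adjAlg (A := A) (H := H)).completeSpace_coe

noncomputable instance : CStarAlgebra (adjAlg A H) where

end BAlg


section CFCLemmas

local notation "B" => adjAlg A H

lemma inner_eq_star_apply (a : B) (x : H) :
    ⟪(a : H →L[ℂ] H) x, (a : H →L[ℂ] H) x⟫
      = ⟪x, ((star a * a : B) : H →L[ℂ] H) x⟫ :=
  (isAdj_star a) x ((a : H →L[ℂ] H) x)

lemma inner_apply_nonneg (a : B) (x : H) :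
    0 ≤ ⟪x, ((star a * a : B) : H →L[ℂ] H) x⟫ := by
  rw [← inner_eq_star_apply]
  exact inner_self_nonneg

lemma coe_algebraMap_real_apply (c : ℝ) (x : H) :
    ((algebraMap ℝ B c : B) : H →L[ℂ] H) x = (c : ℂ) • x := by
  rw [IsScalarTower.algebraMap_apply ℝ ℂ B]
  rfl

/-- The key inequality `⟪a x, a x⟫ ≤ ‖a‖ ^ 2 • ⟪x, x⟫`. -/
lemma inner_apply_le (a : B) (x : H) :
    ⟪(a : H →L[ℂ] H) x, (a : H →L[ℂ] H) x⟫ ≤ (‖a‖ ^ 2) • ⟪x, x⟫ := by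
  set c : ℝ := ‖a‖ ^ 2 with hc
  set aa : B := star a * a with haa
  have haa_sa : IsSelfAdjoint aa := by
    rw [haa]; exact IsSelfAdjoint.star_mul_self a
  have hspec : ∀ μ ∈ spectrum ℝ aa, μ ≤ c := by
    intro μ hμ
    have h1 : ‖μ‖ ≤ ‖aa‖ := by
      have := spectrum.norm_le_norm_mul_of_mem hμ
      have hone : ‖(1 : B)‖ ≤ 1 := by
        rw [norm_coe]
        exact ContinuousLinearMap.norm_id_le
      calc ‖μ‖ ≤ ‖aa‖ * ‖(1 : B)‖ := this
        _ ≤ ‖aa‖ * 1 := by gcongr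
        _ = ‖aa‖ := mul_one _
    have h2 : ‖aa‖ ≤ ‖a‖ ^ 2 := by
      calc ‖aa‖ ≤ ‖star a‖ * ‖a‖ := norm_mul_le _ _
        _ = ‖a‖ * ‖a‖ := by rw [norm_star_eq]
        _ = ‖a‖ ^ 2 := (sq ‖a‖).symm
    calc μ ≤ ‖μ‖ := le_abs_self μ
      _ ≤ ‖a‖ ^ 2 := h1.trans h2
  set d : B := cfc (fun μ : ℝ => Real.sqrt (c - μ)) aa with hd
  have hd_sa : IsSelfAdjoint d := cfc_predicate _ aa
  have hdd : d * d = algebraMap ℝ B c - aa := by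
    rw [hd, ← cfc_mul (fun μ : ℝ => Real.sqrt (c - μ)) (fun μ : ℝ => Real.sqrt (c - μ)) aa]
    have : cfc (fun μ : ℝ => Real.sqrt (c - μ) * Real.sqrt (c - μ)) aa
        = cfc (fun μ : ℝ => c - μ) aa := by
      apply cfc_congr
      intro μ hμ
      exact Real.mul_self_sqrt (by linarith [hspec μ hμ])
    rw [this, cfc_sub (fun _ : ℝ => c) (fun μ : ℝ => μ) aa, cfc_const c aa, cfc_id' ℝ aa]
  have key : (0 : A) ≤ c • ⟪x, x⟫ - ⟪(a : H →L[ℂ] H) x, (a : H →L[ℂ] H) x⟫ := by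
    have h0 : (0:A) ≤ ⟪x, ((star d * d : B) : H →L[ℂ] H) x⟫ := inner_apply_nonneg d x
    rw [hd_sa.star_eq, hdd] at h0
    have hcoe : (((algebraMap ℝ B c - aa : B)) : H →L[ℂ] H) x
        = (c : ℂ) • x - ((aa : B) : H →L[ℂ] H) x := by
      rw [← coe_algebraMap_real_apply (A := A) c x]
      rfl
    rw [hcoe, CStarModuleOld.inner_sub_right, inner_smul_right_complex, Complex.coe_smul,
      ← inner_eq_star_apply] at h0
    exact h0
  have := sub_nonneg.mp key
  rwa [hc] at this

end CFCLemmas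


end Stmt16Aux

set_option linter.unusedSectionVars false
set_option linter.unusedVariables false
set_option synthInstance.maxHeartbeats 1000000
set_option maxHeartbeats 8000000
open CStarModuleOld
namespace Stmt16Aux
variable {A : Type*} [CStarAlgebra A] [PartialOrder A] [StarOrderedRing A]
  {H : Type*} [NormedAddCommGroup H] [NormedSpace ℂ H] [SMul Aᵐᵒᵖ H]
  [CStarModuleOld A H] [CompleteSpace H]
local notation "⟪" x ", " y "⟫" => inner (𝕜 := A) x y

section Gap

local notation "B" => adjAlg A H

variable {S Ss : H →L[ℂ] H}

lemma coe_star_mk (hS : IsAdj (A := A) S Ss) :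
    ((star (⟨S, ⟨Ss, hS⟩⟩ : B) : B) : H →L[ℂ] H) = Ss := adjOf_eq hS

lemma spectrum_nonneg (hS : IsAdj (A := A) S Ss) :
    ∀ μ ∈ spectrum ℝ ((⟨S, ⟨Ss, hS⟩⟩ : B) * star (⟨S, ⟨Ss, hS⟩⟩ : B)), 0 ≤ μ := by
  set s : B := ⟨S, ⟨Ss, hS⟩⟩
  have h := spectrum_star_mul_self_nonneg (b := star s)
  rwa [star_star s] at h

lemma gap (hS : IsAdj (A := A) S Ss) (hclosed : IsClosed (Set.range S)) :
    ∃ δ > (0:ℝ), ∀ μ ∈ spectrum ℝ ((⟨S, ⟨Ss, hS⟩⟩ : B) * star (⟨S, ⟨Ss, hS⟩⟩ : B)),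
      μ = 0 ∨ δ ≤ μ := by
  set s : B := ⟨S, ⟨Ss, hS⟩⟩ with hs_def
  set b : B := s * star s with hb_def
  have hb_sa : IsSelfAdjoint b := IsSelfAdjoint.mul_star_self s
  have hb_coe : ∀ y : H, ((b : B) : H →L[ℂ] H) y = S (Ss y) := by
    intro y
    have : ((b : B) : H →L[ℂ] H) y = (s : H →L[ℂ] H) (((star s : B) : H →L[ℂ] H) y) :=
      coe_mul_apply s (star s) y
    rw [this, coe_star_mk hS]
  -- open mapping constant
  have hFclosed : IsClosed ((LinearMap.range (S : H →ₗ[ℂ] H) : Submodule ℂ H) : Set H) := by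
    rwa [LinearMap.coe_range]
  have : CompleteSpace (LinearMap.range (S : H →ₗ[ℂ] H) : Submodule ℂ H) := hFclosed.completeSpace_coe
  set fhat : H →L[ℂ] (LinearMap.range (S : H →ₗ[ℂ] H) : Submodule ℂ H) :=
    S.codRestrict (LinearMap.range (S : H →ₗ[ℂ] H)) (fun x => LinearMap.mem_range_self (S : H →ₗ[ℂ] H) x) with hfhat
  have hsurj : Function.Surjective fhat := by
    rintro ⟨y, hy⟩
    obtain ⟨x, hx⟩ := LinearMap.mem_range.mp hy
    exact ⟨x, Subtype.ext hx⟩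
  obtain ⟨K, hKpos, hK⟩ := fhat.exists_preimage_norm_le hsurj
  -- preimage bound restated
  have hpre : ∀ y ∈ Set.range S, ∃ x : H, S x = y ∧ ‖x‖ ≤ K * ‖y‖ := by
    rintro y ⟨x0, rfl⟩
    obtain ⟨x, hx1, hx2⟩ := hK ⟨S x0, LinearMap.mem_range_self (S : H →ₗ[ℂ] H) x0⟩
    refine ⟨x, congrArg Subtype.val hx1, ?_⟩
    simpa using hx2
  refine ⟨(3 * K ^ 2)⁻¹, by positivity, ?_⟩
  intro μ hμ
  by_contra hcon
  push_neg at hcon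
  obtain ⟨hμ0, hμδ⟩ := hcon
  have hμpos : 0 < μ := lt_of_le_of_ne (spectrum_nonneg hS μ hμ) (Ne.symm hμ0)
  set ρ : ℝ := μ / 2 with hρ
  have hρpos : 0 < ρ := by positivity
  set f : ℝ → ℝ := fun x => max 0 (1 - |x - μ| / ρ) with hf_def
  have hf_cont : Continuous f :=
    continuous_const.max
      (continuous_const.sub (((continuous_id.sub continuous_const).abs).div_const ρ))
  have hf_nonneg : ∀ x, 0 ≤ f x := fun x => le_max_left 0 _
  have hf_le_one : ∀ x, f x ≤ 1 := by
    intro x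
    apply max_le (by norm_num)
    have : 0 ≤ |x - μ| / ρ := by positivity
    linarith
  have hf_mu : f μ = 1 := by simp [hf_def]
  have hf_zero : ∀ x, x ≤ ρ → f x = 0 := by
    intro x hx
    have h1 : ρ ≤ |x - μ| := by
      rw [abs_sub_comm, abs_of_nonneg (by linarith [hρ] : 0 ≤ μ - x)]
      linarith [hρ]
    apply max_eq_left
    have h2 : 1 ≤ |x - μ| / ρ := (one_le_div hρpos).mpr h1
    linarith
  have hf_supp : ∀ x, f x ≠ 0 → ρ < x ∧ x < 3 * ρ := by
    intro x hx
    constructor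
    · by_contra h
      exact hx (hf_zero x (not_lt.mp h))
    · by_contra h
      push_neg at h
      apply hx
      apply max_eq_left
      have h1 : ρ ≤ |x - μ| := by
        rw [abs_of_nonneg (by linarith : 0 ≤ x - μ)]
        linarith
      have h2 : 1 ≤ |x - μ| / ρ := (one_le_div hρpos).mpr h1
      linarith
  set c : B := cfc f b with hc_def
  have hc1 : (1:ℝ) ∈ spectrum ℝ c := by
    rw [hc_def, cfc_map_spectrum (f := f) (a := b) hb_sa hf_cont.continuousOn]
    exact ⟨μ, hμ, hf_mu⟩
  have hcnorm : 1 ≤ ‖c‖ := by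
    have h1 : ‖(1:ℝ)‖ ≤ ‖c‖ * ‖(1 : B)‖ := spectrum.norm_le_norm_mul_of_mem hc1
    have hone : ‖(1 : B)‖ ≤ 1 := by
      rw [norm_coe]; exact ContinuousLinearMap.norm_id_le
    have : ‖(1:ℝ)‖ = 1 := by norm_num
    nlinarith [norm_nonneg c, mul_le_mul_of_nonneg_left hone (norm_nonneg c)]
  obtain ⟨z, hz⟩ : ∃ z : H, (1/2) * ‖z‖ < ‖(c : H →L[ℂ] H) z‖ := by
    by_contra h
    push_neg at h
    have : ‖c‖ ≤ 1/2 := by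
      rw [norm_coe]
      apply ContinuousLinearMap.opNorm_le_bound _ (by norm_num)
      intro x
      have := h x
      linarith
    linarith
  have hznorm : 0 < ‖z‖ := by
    by_contra h
    push_neg at h
    have hz0 : z = 0 := by
      have : ‖z‖ = 0 := le_antisymm h (norm_nonneg z)
      exact norm_eq_zero.mp this
    rw [hz0] at hz
    simp at hz
  set y : H := (c : H →L[ℂ] H) z with hy_def
  have hynorm : ‖z‖ / 2 < ‖y‖ := by rw [hy_def]; linarith
  have hypos : 0 < ‖y‖ := lt_of_le_of_lt (by positivity) hynorm
  -- y is in the range of S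
  set w : ℝ → ℝ := fun x => f x * (max x ρ)⁻¹ with hw_def
  have hw_cont : Continuous w := by
    apply hf_cont.mul
    apply (continuous_id.max continuous_const).inv₀
    intro x
    have : ρ ≤ max x ρ := le_max_right x ρ
    exact ne_of_gt (lt_of_lt_of_le hρpos this)
  have hfw : ∀ x : ℝ, x * w x = f x := by
    intro x
    by_cases hx : f x = 0
    · rw [hw_def]; simp [hx]
    · obtain ⟨h1, _⟩ := hf_supp x hx
      have hmax : max x ρ = x := max_eq_left (le_of_lt h1)
      have hxpos : (0:ℝ) < x := lt_trans hρpos h1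
      rw [hw_def]
      simp only [hmax]
      field_simp
  -- y ∈ range S
  have hy_mem : y ∈ Set.range S := by
    have hc_eq : c = b * cfc w b := by
      have h1 : cfc (fun x : ℝ => x * w x) b = cfc (fun x : ℝ => x) b * cfc w b :=
        cfc_mul (fun x : ℝ => x) w b (continuous_id'.continuousOn) hw_cont.continuousOn
      have h2 : cfc (fun x : ℝ => x) b = b := cfc_id' ℝ b hb_sa
      rw [hc_def]
      calc cfc f b = cfc (fun x : ℝ => x * w x) b := cfc_congr (fun x _ => (hfw x).symm)
        _ = b * cfc w b := by rw [h1, h2]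
    have : y = S (Ss (((cfc w b : B) : H →L[ℂ] H) z)) := by
      rw [hy_def, hc_eq]
      have h1 : (((b * cfc w b : B)) : H →L[ℂ] H) z
          = (b : H →L[ℂ] H) (((cfc w b : B) : H →L[ℂ] H) z) := coe_mul_apply _ _ z
      rw [h1, hb_coe]
    exact ⟨_, this.symm⟩
  -- lower bounds
  obtain ⟨x₀, hx₀1, hx₀2⟩ := hpre y hy_mem
  have e1 : ‖y‖ ^ 2 ≤ K * ‖y‖ * ‖Ss y‖ := by
    calc ‖y‖ ^ 2 = ‖⟪y, y⟫‖ := norm_sq_eq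
      _ = ‖⟪S x₀, y⟫‖ := by rw [hx₀1]
      _ = ‖⟪x₀, Ss y⟫‖ := by rw [hS x₀ y]
      _ ≤ ‖x₀‖ * ‖Ss y‖ := norm_inner_le H
      _ ≤ (K * ‖y‖) * ‖Ss y‖ := by gcongr
  have e2 : ‖Ss y‖ ^ 2 ≤ ‖y‖ * ‖(b : H →L[ℂ] H) y‖ := by
    calc ‖Ss y‖ ^ 2 = ‖⟪Ss y, Ss y⟫‖ := norm_sq_eq
      _ = ‖⟪S (Ss y), y⟫‖ := by rw [hS (Ss y) y]
      _ ≤ ‖S (Ss y)‖ * ‖y‖ := norm_inner_le H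
      _ = ‖(b : H →L[ℂ] H) y‖ * ‖y‖ := by rw [hb_coe]
      _ = ‖y‖ * ‖(b : H →L[ℂ] H) y‖ := mul_comm _ _
  have e3 : ‖(b : H →L[ℂ] H) y‖ ≤ (3 * ρ) * ‖z‖ := by
    have hbc : (b : H →L[ℂ] H) y = ((b * c : B) : H →L[ℂ] H) z := by
      rw [hy_def]; exact (coe_mul_apply b c z).symm
    have hbc2 : b * c = cfc (fun x : ℝ => x * f x) b := by
      have h1 : cfc (fun x : ℝ => x * f x) b = cfc (fun x : ℝ => x) b * cfc f b :=
        cfc_mul (fun x : ℝ => x) f b (continuous_id'.continuousOn) hf_cont.continuousOn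
      have h2 : cfc (fun x : ℝ => x) b = b := cfc_id' ℝ b hb_sa
      rw [hc_def, h1, h2]
    have hnorm : ‖b * c‖ ≤ 3 * ρ := by
      rw [hbc2]
      apply norm_cfc_le (by positivity)
      intro x hx
      by_cases hfx : f x = 0
      · simp [hfx]; positivity
      · obtain ⟨h1, h2⟩ := hf_supp x hfx
        have hxpos : (0:ℝ) < x := lt_trans hρpos h1
        rw [Real.norm_eq_abs, abs_of_nonneg (by positivity : 0 ≤ x * f x)]
        calc x * f x ≤ x * 1 := by
              apply mul_le_mul_of_nonneg_left (hf_le_one x) (le_of_lt hxpos)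
          _ = x := mul_one x
          _ ≤ 3 * ρ := le_of_lt h2
    calc ‖(b : H →L[ℂ] H) y‖ = ‖((b * c : B) : H →L[ℂ] H) z‖ := by rw [hbc]
      _ ≤ ‖((b * c : B) : H →L[ℂ] H)‖ * ‖z‖ := ((b * c : B) : H →L[ℂ] H).le_opNorm z
      _ ≤ (3 * ρ) * ‖z‖ := by
          apply mul_le_mul_of_nonneg_right _ (norm_nonneg z)
          rw [← norm_coe] at *
          exact hnorm
  -- combine
  have e4 : ‖y‖ ≤ K * ‖Ss y‖ := by nlinarith [e1, hypos]
  have e4' : ‖y‖ ^ 2 ≤ K ^ 2 * ‖Ss y‖ ^ 2 := by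
    nlinarith [e4, hypos.le, norm_nonneg (Ss y), hKpos.le]
  have e5 : ‖y‖ ^ 2 ≤ K ^ 2 * (‖y‖ * ((3 * ρ) * ‖z‖)) := by
    refine e4'.trans ?_
    apply mul_le_mul_of_nonneg_left _ (by positivity : (0:ℝ) ≤ K ^ 2)
    exact e2.trans (mul_le_mul_of_nonneg_left e3 hypos.le)
  have e6 : ‖y‖ ≤ K ^ 2 * ((3 * ρ) * ‖z‖) := by nlinarith [e5, hypos]
  have hfin : ‖z‖ / 2 < K ^ 2 * ((3 * ρ) * ‖z‖) := lt_of_lt_of_le hynorm e6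
  have h1 : 1 / 2 < K ^ 2 * (3 * ρ) := by nlinarith [hznorm, hfin]
  have h3 : (3 * K ^ 2) * μ < 1 := by
    have h4 := mul_lt_mul_of_pos_left hμδ (by positivity : (0:ℝ) < 3 * K ^ 2)
    rwa [mul_inv_cancel₀ (by positivity : (3:ℝ) * K ^ 2 ≠ 0)] at h4
  rw [hρ] at h1
  nlinarith [h1, h3]

end Gap

end Stmt16Aux

set_option linter.unusedSectionVars false
set_option linter.unusedVariables false
set_option synthInstance.maxHeartbeats 1000000
set_option maxHeartbeats 8000000
open CStarModuleOld
namespace Stmt16Aux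
variable {A : Type*} [CStarAlgebra A] [PartialOrder A] [StarOrderedRing A]
  {H : Type*} [NormedAddCommGroup H] [NormedSpace ℂ H] [SMul Aᵐᵒᵖ H]
  [CStarModuleOld A H] [CompleteSpace H]
local notation "⟪" x ", " y "⟫" => inner (𝕜 := A) x y
local notation "B" => adjAlg A H

variable {S Ss : H →L[ℂ] H}

lemma master (hS : IsAdj (A := A) S Ss) (hclosed : IsClosed (Set.range S)) :
    ∃ w : adjAlg A H, IsSelfAdjoint ((⟨S, ⟨Ss, hS⟩⟩ : B) * w) ∧
      ((⟨S, ⟨Ss, hS⟩⟩ : B) * w) * (⟨S, ⟨Ss, hS⟩⟩ : B) = (⟨S, ⟨Ss, hS⟩⟩ : B) := by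
  obtain ⟨δ, hδpos, hgap⟩ := gap hS hclosed
  set s : B := ⟨S, ⟨Ss, hS⟩⟩ with hs_def
  set b : B := s * star s with hb_def
  have hb_sa : IsSelfAdjoint b := IsSelfAdjoint.mul_star_self s
  set m : ℝ → ℝ := fun x => min x δ / (δ * max x δ) with hm_def
  have hm_cont : Continuous m := by
    apply (continuous_id.min continuous_const).div
      (continuous_const.mul (continuous_id.max continuous_const))
    intro x
    exact ne_of_gt (mul_pos hδpos (lt_of_lt_of_le hδpos (le_max_right x δ)))
  set g : B := cfc m b with hg_def
  have hg_sa : IsSelfAdjoint g := cfc_predicate m b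
  refine ⟨star s * g, ?_, ?_⟩
  case _ => ?_
  all_goals
    have key1 : s * (star s * g) = b * g := by rw [hb_def, mul_assoc]
  -- selfadjointness of b * g
  · rw [key1]
    have hcomm : g * b = b * g := by
      have h2 : cfc (fun x : ℝ => x) b = b := cfc_id' ℝ b hb_sa
      have := cfc_commute_cfc m (fun x : ℝ => x) b
      rw [h2] at this
      exact this.eq
    rw [IsSelfAdjoint]
    rw [star_mul, hg_sa.star_eq, hb_sa.star_eq]
    exact hcomm
  · -- (b * g) * s = s
    rw [key1]
    have hk1 : ∀ μ ∈ spectrum ℝ b, μ = 0 ∨ μ * m μ = 1 := by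
      intro μ hμ
      rcases hgap μ hμ with h | h
      · exact Or.inl h
      · right
        have hμpos : 0 < μ := lt_of_lt_of_le hδpos h
        rw [hm_def]
        simp only [min_eq_right h, max_eq_left h]
        field_simp
        try ring
    have hcont1 : Continuous (fun x : ℝ => 1 - x * m x) :=
      continuous_const.sub (continuous_id.mul hm_cont)
    set u : B := 1 - b * g with hu_def
    have hu_cfc : u = cfc (fun x : ℝ => 1 - x * m x) b := by
      have h1 : cfc (fun x : ℝ => 1 - x * m x) b
          = cfc (fun _ : ℝ => 1) b - cfc (fun x : ℝ => x * m x) b :=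
        cfc_sub (fun _ : ℝ => 1) (fun x : ℝ => x * m x) b
          (continuous_const.continuousOn) ((continuous_id.mul hm_cont).continuousOn)
      have h2 : cfc (fun x : ℝ => x * m x) b = cfc (fun x : ℝ => x) b * cfc m b :=
        cfc_mul (fun x : ℝ => x) m b (continuous_id'.continuousOn) hm_cont.continuousOn
      have h3 : cfc (fun x : ℝ => x) b = b := cfc_id' ℝ b hb_sa
      have h4 : cfc (fun _ : ℝ => 1) b = (1 : B) := cfc_const_one ℝ b hb_sa
      rw [hu_def, h1, h2, h3, h4, hg_def]
    have hu_sa : IsSelfAdjoint u := by rw [hu_cfc]; exact cfc_predicate _ b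
    have hubu : u * b * u = 0 := by
      have c1 : cfc (fun x : ℝ => (1 - x * m x) * x) b = u * b := by
        have := cfc_mul (fun x : ℝ => 1 - x * m x) (fun x : ℝ => x) b
          hcont1.continuousOn (continuous_id'.continuousOn)
        rw [this, cfc_id' ℝ b hb_sa, ← hu_cfc]
      have c2 : cfc (fun x : ℝ => ((1 - x * m x) * x) * (1 - x * m x)) b = u * b * u := by
        have := cfc_mul (fun x : ℝ => (1 - x * m x) * x) (fun x : ℝ => 1 - x * m x) b
          (hcont1.mul (continuous_id')).continuousOn hcont1.continuousOn
        rw [this, c1, ← hu_cfc]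
      rw [← c2]
      have : cfc (fun x : ℝ => ((1 - x * m x) * x) * (1 - x * m x)) b
          = cfc (fun _ : ℝ => (0:ℝ)) b := by
        apply cfc_congr
        intro μ hμ
        rcases hk1 μ hμ with h | h
        · simp [h]
        · simp [h]
      rw [this, cfc_const_zero ℝ b]
    have hus : u * s = 0 := by
      have hstar_us : star (u * s) = star s * u := by rw [star_mul, hu_sa.star_eq]
      have hnorm1 : ‖u * s‖ * ‖u * s‖ ≤ ‖(u * s) * star (u * s)‖ := by
        have h5 := CStarRing.norm_mul_self_le (E := adjAlg A H) (star (u * s))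
        rwa [norm_star_eq, star_star] at h5
      have hprod : (u * s) * star (u * s) = u * b * u := by
        rw [hstar_us, hb_def]
        noncomm_ring
      rw [hprod, hubu, norm_zero] at hnorm1
      have : ‖u * s‖ = 0 := by nlinarith [norm_nonneg (u * s)]
      exact norm_eq_zero.mp this
    have : (1 - b * g) * s = 0 := by rw [← hu_def]; exact hus
    rw [sub_mul, one_mul] at this
    have := sub_eq_zero.mp this
    exact this.symm

end Stmt16Aux

set_option linter.unusedSectionVars false
set_option linter.unusedVariables false
set_option synthInstance.maxHeartbeats 1000000
set_option maxHeartbeats 8000000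

open CStarModuleOld

/-- **Douglas factorization in Hilbert C⋆-modules.** For adjointable
`T, S ∈ End*_A(H)` with `R(S)` closed, the following are equivalent:
(i) `R(T) ⊆ R(S)`; (ii) `T T* ≤ λ² S S*` for some `λ ≥ 0`; (iii) `T = S Q` for some
adjointable `Q`. -/
theorem stmt16
    {A : Type*} [CStarAlgebra A] [PartialOrder A] [StarOrderedRing A]
    {H : Type*} [NormedAddCommGroup H] [NormedSpace ℂ H] [SMul Aᵐᵒᵖ H]
    [CStarModuleOld A H] [CompleteSpace H]
    (T Ts S Ss : H →L[ℂ] H)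
    (hT : ∀ x y : H, inner (𝕜 := A) (T x) y = inner (𝕜 := A) x (Ts y))
    (hS : ∀ x y : H, inner (𝕜 := A) (S x) y = inner (𝕜 := A) x (Ss y))
    (hclosed : IsClosed (Set.range S)) :
    ((Set.range T ⊆ Set.range S) ↔
      ∃ lam : ℝ, 0 ≤ lam ∧ ∀ f : H,
        inner (𝕜 := A) f (T (Ts f)) ≤ (lam ^ 2) • inner (𝕜 := A) f (S (Ss f))) ∧
    ((Set.range T ⊆ Set.range S) ↔
      ∃ Q Qs : H →L[ℂ] H,
        (∀ x y : H, inner (𝕜 := A) (Q x) y = inner (𝕜 := A) x (Qs y)) ∧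
        T = S.comp Q) := by
  classical
  open Stmt16Aux in
  -- abbreviations
  have hS' : Stmt16Aux.IsAdj (A := A) S Ss := hS
  have hT' : Stmt16Aux.IsAdj (A := A) T Ts := hT
  set s : Stmt16Aux.adjAlg A H := ⟨S, ⟨Ss, hS'⟩⟩ with hs_def
  set t : Stmt16Aux.adjAlg A H := ⟨T, ⟨Ts, hT'⟩⟩ with ht_def
  obtain ⟨w, hsw_sa, hsw_s⟩ := Stmt16Aux.master hS' hclosed
  have hstar_s : ((star s : Stmt16Aux.adjAlg A H) : H →L[ℂ] H) = Ss := Stmt16Aux.coe_star_mk hS'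
  have hstar_t : ((star t : Stmt16Aux.adjAlg A H) : H →L[ℂ] H) = Ts := Stmt16Aux.coe_star_mk hT'
  set u : Stmt16Aux.adjAlg A H := 1 - s * w with hu_def
  have hu_sa : IsSelfAdjoint u := (IsSelfAdjoint.one _).sub hsw_sa
  have hus : u * s = 0 := by rw [hu_def, sub_mul, one_mul, hsw_s, sub_self]
  have hssu : star s * u = 0 := by
    have : star (u * s) = star s * u := by rw [star_mul, hu_sa.star_eq]
    rw [← this, hus, star_zero]
  -- (A) range inclusion implies factorization
  have hA : Set.range T ⊆ Set.range S → t = s * (w * t) := by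
    intro hr
    rw [← mul_assoc]
    have h1 : (s * w) * t = t := by
      apply Subtype.ext
      apply ContinuousLinearMap.ext
      intro x
      obtain ⟨v, hv⟩ := hr ⟨x, rfl⟩
      have e1 : (((s * w) * t : Stmt16Aux.adjAlg A H) : H →L[ℂ] H) x
          = ((s * w : Stmt16Aux.adjAlg A H) : H →L[ℂ] H) (T x) :=
        Stmt16Aux.coe_mul_apply (s * w) t x
      rw [e1, ← hv]
      have e2 : ((s * w : Stmt16Aux.adjAlg A H) : H →L[ℂ] H) (S v)
          = (((s * w) * s : Stmt16Aux.adjAlg A H) : H →L[ℂ] H) v :=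
        (Stmt16Aux.coe_mul_apply (s * w) s v).symm
      rw [e2, hsw_s]
    exact h1.symm
  -- pointwise identities
  have hTT : ∀ f : H, inner (𝕜 := A) f (T (Ts f))
      = inner (𝕜 := A) (((star t : Stmt16Aux.adjAlg A H) : H →L[ℂ] H) f) (((star t : Stmt16Aux.adjAlg A H) : H →L[ℂ] H) f) := by
    intro f
    have h1 := Stmt16Aux.inner_eq_star_apply (star t) f
    rw [star_star] at h1
    rw [h1]
    have : ((t * star t : Stmt16Aux.adjAlg A H) : H →L[ℂ] H) f
        = T (Ts f) := by
      rw [Stmt16Aux.coe_mul_apply t (star t) f, hstar_t]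
    rw [this]
  have hSS : ∀ f : H, inner (𝕜 := A) f (S (Ss f))
      = inner (𝕜 := A) (((star s : Stmt16Aux.adjAlg A H) : H →L[ℂ] H) f) (((star s : Stmt16Aux.adjAlg A H) : H →L[ℂ] H) f) := by
    intro f
    have h1 := Stmt16Aux.inner_eq_star_apply (star s) f
    rw [star_star] at h1
    rw [h1]
    have : ((s * star s : Stmt16Aux.adjAlg A H) : H →L[ℂ] H) f
        = S (Ss f) := by
      rw [Stmt16Aux.coe_mul_apply s (star s) f, hstar_s]
    rw [this]
  -- (D) the order condition implies u * t = 0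
  have hD : ∀ lam : ℝ, (∀ f : H,
      inner (𝕜 := A) f (T (Ts f)) ≤ (lam ^ 2) • inner (𝕜 := A) f (S (Ss f))) →
      u * t = 0 := by
    intro lam hpt
    have hut' : star t * u = 0 := by
      apply Subtype.ext
      apply ContinuousLinearMap.ext
      intro f
      have e0 : ((star t * u : Stmt16Aux.adjAlg A H) : H →L[ℂ] H) f
          = ((star t : Stmt16Aux.adjAlg A H) : H →L[ℂ] H) (((u : Stmt16Aux.adjAlg A H) : H →L[ℂ] H) f) :=
        Stmt16Aux.coe_mul_apply (star t) u f
      rw [e0]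
      set h : H := ((u : Stmt16Aux.adjAlg A H) : H →L[ℂ] H) f with hh_def
      have h2 := hpt h
      rw [hTT h, hSS h] at h2
      have h4 : ((star s : Stmt16Aux.adjAlg A H) : H →L[ℂ] H) h = 0 := by
        rw [hh_def]
        have e7 : ((star s : Stmt16Aux.adjAlg A H) : H →L[ℂ] H)
              (((u : Stmt16Aux.adjAlg A H) : H →L[ℂ] H) f)
            = ((star s * u : Stmt16Aux.adjAlg A H) : H →L[ℂ] H) f :=
          (Stmt16Aux.coe_mul_apply (star s) u f).symm
        rw [e7, hssu]
        rfl
      rw [h4] at h2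
      simp only [CStarModuleOld.inner_zero_right, smul_zero] at h2
      have h5 : (0:A) ≤ inner (𝕜 := A) (((star t : Stmt16Aux.adjAlg A H) : H →L[ℂ] H) h)
          (((star t : Stmt16Aux.adjAlg A H) : H →L[ℂ] H) h) := CStarModuleOld.inner_self_nonneg
      have h6 : inner (𝕜 := A) (((star t : Stmt16Aux.adjAlg A H) : H →L[ℂ] H) h)
          (((star t : Stmt16Aux.adjAlg A H) : H →L[ℂ] H) h) = 0 := le_antisymm h2 h5
      exact CStarModuleOld.inner_self.mp h6
    have : star (star t * u) = u * t := by rw [star_mul, hu_sa.star_eq, star_star]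
    rw [← this, hut', star_zero]
  -- (C) u * t = 0 implies range inclusion
  have hC : u * t = 0 → Set.range T ⊆ Set.range S := by
    intro hut
    have h1 : t = s * (w * t) := by
      have h2 : t - (s * w) * t = 0 := by
        calc t - (s * w) * t = (1 - s * w) * t := by rw [sub_mul, one_mul]
          _ = u * t := by rw [hu_def]
          _ = 0 := hut
      have h3 := sub_eq_zero.mp h2
      rw [← mul_assoc]
      exact h3
    rintro y ⟨x, rfl⟩
    refine ⟨((w * t : Stmt16Aux.adjAlg A H) : H →L[ℂ] H) x, ?_⟩
    have e1 : ((s * (w * t) : Stmt16Aux.adjAlg A H) : H →L[ℂ] H) x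
        = S (((w * t : Stmt16Aux.adjAlg A H) : H →L[ℂ] H) x) :=
      Stmt16Aux.coe_mul_apply s (w * t) x
    rw [← e1, ← h1]
  refine ⟨⟨?_, ?_⟩, ⟨?_, ?_⟩⟩
  · -- (i) → (ii)
    intro hr
    have hfact := hA hr
    set q : Stmt16Aux.adjAlg A H := w * t with hq_def
    refine ⟨‖q‖, norm_nonneg q, ?_⟩
    intro f
    rw [hTT f, hSS f]
    have h2 : ((star t : Stmt16Aux.adjAlg A H) : H →L[ℂ] H) f
        = ((star q : Stmt16Aux.adjAlg A H) : H →L[ℂ] H) (((star s : Stmt16Aux.adjAlg A H) : H →L[ℂ] H) f) := by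
      have h3 : star t = star q * star s := by rw [hfact, star_mul]
      rw [h3]
      exact Stmt16Aux.coe_mul_apply (star q) (star s) f
    rw [h2]
    have h4 := Stmt16Aux.inner_apply_le (star q) (((star s : Stmt16Aux.adjAlg A H) : H →L[ℂ] H) f)
    rwa [Stmt16Aux.norm_star_eq] at h4
  · -- (ii) → (i)
    rintro ⟨lam, hlam, hpt⟩
    exact hC (hD lam hpt)
  · -- (i) → (iii)
    intro hr
    have hfact := hA hr
    refine ⟨((w * t : Stmt16Aux.adjAlg A H) : H →L[ℂ] H),
      ((star (w * t) : Stmt16Aux.adjAlg A H) : H →L[ℂ] H),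
      Stmt16Aux.isAdj_star (w * t), ?_⟩
    apply ContinuousLinearMap.ext
    intro x
    have e1 : T x = ((s * (w * t) : Stmt16Aux.adjAlg A H) : H →L[ℂ] H) x := by
      rw [← hfact]
    rw [e1, Stmt16Aux.coe_mul_apply s (w * t) x]
    rfl
  · -- (iii) → (i)
    rintro ⟨Q, Qs, hQ, hTQ⟩
    rintro y ⟨x, rfl⟩
    exact ⟨Q x, by rw [hTQ]; rfl⟩
end

section
/- Let H be a Hilbert C*-module over a unital C*-algebra A. For a bounded A-linear map T : H → H, there exists k ≥ 0 such that ⟨Tx,Tx⟩ ≤ k⟨x,x⟩ for all x ∈ H; conversely, any A-linear map satisfying such an inequality is bounded with ‖T‖² ≤ k. -/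
open CStarModule
open scoped RightActions

/-- The Hilbert C⋆-module class as it stood in the older Mathlib: a *right* `A`-module
(action `x <• a`) with an `A`-valued inner product linear in the second argument,
`⟪x, y <• a⟫ = ⟪x, y⟫ * a`. (Mathlib's `CStarModule` is now a left-module class.) -/
class CStarModuleRight (A E : Type*) [NonUnitalSemiring A] [StarRing A]
    [Module ℂ A] [AddCommGroup E] [Module ℂ E] [PartialOrder A] [SMul Aᵐᵒᵖ E] [Norm A] [Norm E]
    extends Inner A E where
  inner_add_right {x} {y} {z} : inner x (y + z) = inner x y + inner x z
  inner_self_nonneg {x} : 0 ≤ inner x x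
  inner_self {x} : inner x x = 0 ↔ x = 0
  inner_op_smul_right {a : A} {x y : E} : inner x (y <• a) = inner x y * a
  inner_smul_right_complex {z : ℂ} {x} {y} : inner x (z • y) = z • inner x y
  star_inner x y : star (inner x y) = inner y x
  norm_eq_sqrt_norm_inner_self x : ‖x‖ = √‖inner x x‖

section CRHelpers
variable {A : Type*} [CStarAlgebra A] [PartialOrder A]
    {H : Type*} [NormedAddCommGroup H] [NormedSpace ℂ H] [SMul Aᵐᵒᵖ H] [CStarModuleRight A H]

lemma cr_inner_self_nonneg {x : H} : 0 ≤ inner A x x := CStarModuleRight.inner_self_nonneg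

lemma cr_inner_self {x : H} : inner A x x = 0 ↔ x = 0 := CStarModuleRight.inner_self

lemma cr_inner_sub_right {x y z : H} : inner A x (y - z) = inner A x y - inner A x z :=
  map_sub (AddMonoidHom.mk' (fun y => inner A x y)
    (fun _ _ => CStarModuleRight.inner_add_right)) y z

lemma cr_inner_sub_left {x y z : H} : inner A (x - y) z = inner A x z - inner A y z := by
  rw [← CStarModuleRight.star_inner z, cr_inner_sub_right, star_sub,
    CStarModuleRight.star_inner, CStarModuleRight.star_inner]

lemma cr_inner_op_smul_right {a : A} {x y : H} : inner A x (y <• a) = inner A x y * a :=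
  CStarModuleRight.inner_op_smul_right

lemma cr_inner_op_smul_left {a : A} {x y : H} : inner A (x <• a) y = star a * inner A x y := by
  rw [← CStarModuleRight.star_inner y, cr_inner_op_smul_right, star_mul,
    CStarModuleRight.star_inner]

lemma cr_norm_sq_eq {x : H} : ‖x‖ ^ 2 = ‖inner A x x‖ := by
  rw [CStarModuleRight.norm_eq_sqrt_norm_inner_self (A := A) x, Real.sq_sqrt (norm_nonneg _)]

lemma cr_isSelfAdjoint_inner_self {x : H} : IsSelfAdjoint (inner A x x) :=
  CStarModuleRight.star_inner x x

end CRHelpers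


lemma aux_sqrt {A : Type*} [CStarAlgebra A] [PartialOrder A] [StarOrderedRing A]
    (a : A) (ha : 0 ≤ a) (ε : ℝ) (hε : 0 < ε) :
    ∃ c d : A, IsSelfAdjoint c ∧ IsSelfAdjoint d ∧ d * c = 1 ∧ c * d = 1 ∧
      c * c = a + ε • 1 ∧ d * a * d ≤ 1 := by
  have hsp : spectrum ℝ a ⊆ Set.Ici 0 := spectrum_nonneg_of_nonneg ha
  have hsa : IsSelfAdjoint a := IsSelfAdjoint.of_nonneg ha
  set f : ℝ → ℝ := fun t => Real.sqrt (t + ε) with hf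
  set g : ℝ → ℝ := fun t => (Real.sqrt (t + ε))⁻¹ with hg
  have hfc : ContinuousOn f (spectrum ℝ a) :=
    (Real.continuous_sqrt.comp (continuous_add_right ε)).continuousOn
  have hgc : ContinuousOn g (spectrum ℝ a) := by
    apply ContinuousOn.inv₀ hfc
    intro t ht
    have : 0 ≤ t := hsp ht
    positivity
  have hdc : cfc g a * cfc f a = 1 := by
    rw [← cfc_mul g f a hgc hfc, ← cfc_one ℝ a hsa]
    apply cfc_congr
    intro t ht
    have h0 : 0 ≤ t := hsp ht
    have : Real.sqrt (t + ε) ≠ 0 := by positivity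
    simp [f, g, inv_mul_cancel₀ this]
  have hcd : cfc f a * cfc g a = 1 := by
    rw [← cfc_mul f g a hfc hgc, ← cfc_one ℝ a hsa]
    apply cfc_congr
    intro t ht
    have h0 : 0 ≤ t := hsp ht
    have : Real.sqrt (t + ε) ≠ 0 := by positivity
    simp [f, g, mul_inv_cancel₀ this]
  have hcc : cfc f a * cfc f a = a + ε • 1 := by
    rw [← cfc_mul f f a hfc hfc]
    have h2 : cfc (fun t => f t * f t) a = cfc (fun t : ℝ => t + ε) a := by
      apply cfc_congr
      intro t ht
      have h0 : 0 ≤ t := hsp ht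
      simp only [f]
      rw [Real.mul_self_sqrt (by linarith)]
    rw [h2, cfc_add a (fun t : ℝ => t) (fun _ => ε) continuousOn_id continuousOn_const,
      cfc_id' ℝ a hsa, cfc_const ε a hsa, Algebra.algebraMap_eq_smul_one]
  refine ⟨cfc f a, cfc g a, cfc_predicate f a, cfc_predicate g a, hdc, hcd, hcc, ?_⟩
  have h1 : a ≤ a + ε • 1 := by
    have h0 : (0:A) ≤ ε • 1 := by
      rw [← Algebra.algebraMap_eq_smul_one, ← cfc_const ε (0:A) (cfc_predicate_zero ℝ)]
      exact cfc_nonneg fun t _ => hε.le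
    simpa using add_le_add_left h0 a
  have hdsa : IsSelfAdjoint (cfc g a) := cfc_predicate g a
  calc cfc g a * a * cfc g a
      ≤ cfc g a * (a + ε • 1) * cfc g a := hdsa.conjugate_le_conjugate h1
    _ = 1 := by rw [← hcc, mul_assoc, mul_assoc, hcd, mul_one, hdc]

lemma aux_algebraMap_mono {A : Type*} [CStarAlgebra A] [PartialOrder A] [StarOrderedRing A]
    {r s : ℝ} (h : r ≤ s) : algebraMap ℝ A r ≤ algebraMap ℝ A s := by
  rw [← sub_nonneg, ← map_sub, ← cfc_const (s - r) (0:A) (cfc_predicate_zero ℝ)]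
  exact cfc_nonneg fun t _ => sub_nonneg.mpr h

theorem stmt17'
    {A : Type*} [CStarAlgebra A] [PartialOrder A] [StarOrderedRing A]
    {H : Type*} [NormedAddCommGroup H] [NormedSpace ℂ H] [SMul Aᵐᵒᵖ H]
    [CStarModuleRight A H] [CompleteSpace H]
    (T : H →L[ℂ] H) (hTmod : ∀ (a : A) (x : H), T (x <• a) = T x <• a)
    (x : H) :
    inner (𝕜 := A) (T x) (T x) ≤ (‖T‖ ^ 2) • inner (𝕜 := A) x x := by
  have key : ∀ ε : ℝ, ε ∈ Set.Ioi (0:ℝ) →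
      inner (𝕜 := A) (T x) (T x) ≤
        ‖T‖ ^ 2 • inner (𝕜 := A) x x + (‖T‖ ^ 2 * ε) • (1:A) := by
    intro ε hε
    rw [Set.mem_Ioi] at hε
    set a : A := inner (𝕜 := A) x x with ha_def
    obtain ⟨c, d, hcsa, hdsa, hdc, hcd, hcc, hdad⟩ :=
      aux_sqrt a cr_inner_self_nonneg ε hε
    set y : H := x <• d with hy_def
    have hxy : y <• c = x := by
      rw [← sub_eq_zero, ← cr_inner_self (A := A)]
      simp only [cr_inner_sub_left, cr_inner_sub_right, hy_def,
        cr_inner_op_smul_left, cr_inner_op_smul_right, hdsa.star_eq, hcsa.star_eq, ← ha_def]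
      have : c * d * a = a := by rw [hcd, one_mul]
      rw [← mul_assoc c d a, this]
      simp
    have hyy : inner (𝕜 := A) y y = d * a * d := by
      rw [hy_def, cr_inner_op_smul_right, cr_inner_op_smul_left, hdsa.star_eq]
    have hny : ‖y‖ ≤ 1 := by
      have h1 : ‖y‖ ^ 2 ≤ 1 := by
        rw [cr_norm_sq_eq (A := A)]
        exact (CStarAlgebra.norm_le_one_iff_of_nonneg _ cr_inner_self_nonneg).mpr
          (hyy ▸ hdad)
      nlinarith [norm_nonneg y]
    have hTy : ‖T y‖ ≤ ‖T‖ :=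
      (T.le_opNorm y).trans (by nlinarith [norm_nonneg T])
    have hip : inner (𝕜 := A) (T y) (T y) ≤ (‖T‖ ^ 2) • (1:A) := by
      calc inner (𝕜 := A) (T y) (T y)
          ≤ algebraMap ℝ A ‖inner (𝕜 := A) (T y) (T y)‖ :=
            IsSelfAdjoint.le_algebraMap_norm_self cr_isSelfAdjoint_inner_self
        _ ≤ algebraMap ℝ A (‖T‖ ^ 2) := by
            apply aux_algebraMap_mono
            rw [← cr_norm_sq_eq (A := A)]
            nlinarith [norm_nonneg (T y)]
        _ = (‖T‖ ^ 2) • (1:A) := Algebra.algebraMap_eq_smul_one _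
    have hTx : T x = T y <• c := by rw [← hxy, hTmod]
    calc inner (𝕜 := A) (T x) (T x)
        = c * inner (𝕜 := A) (T y) (T y) * c := by
          rw [hTx, cr_inner_op_smul_right, cr_inner_op_smul_left, hcsa.star_eq]
      _ ≤ c * ((‖T‖ ^ 2) • (1:A)) * c := hcsa.conjugate_le_conjugate hip
      _ = (‖T‖ ^ 2) • (c * c) := by
          rw [mul_smul_comm, smul_mul_assoc, mul_one]
      _ = ‖T‖ ^ 2 • a + (‖T‖ ^ 2 * ε) • (1:A) := by
          rw [hcc, smul_add, smul_smul]
  have lim : Filter.Tendsto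
      (fun ε : ℝ => ‖T‖ ^ 2 • inner (𝕜 := A) x x + (‖T‖ ^ 2 * ε) • (1:A))
      (nhdsWithin 0 (Set.Ioi 0)) (nhds (‖T‖ ^ 2 • inner (𝕜 := A) x x)) := by
    have hcont : Continuous
        (fun ε : ℝ => ‖T‖ ^ 2 • inner (𝕜 := A) x x + (‖T‖ ^ 2 * ε) • (1:A)) := by
      fun_prop
    have h := (hcont.tendsto 0).mono_left
      (nhdsWithin_le_nhds (s := Set.Ioi (0:ℝ)))
    simpa using h
  exact ge_of_tendsto lim (Filter.eventually_of_mem self_mem_nhdsWithin key)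

/-- On a Hilbert C⋆-module `H` over a unital C⋆-algebra `A`: every bounded
`A`-linear map `T : H → H` satisfies `⟪T x, T x⟫ ≤ k ⟪x, x⟫` for some `k ≥ 0`; and conversely
any `A`-linear map satisfying such an inequality is bounded with `‖T‖² ≤ k`
(i.e. `‖T x‖² ≤ k ‖x‖²` for all `x`). -/
theorem stmt17
    {A : Type*} [CStarAlgebra A] [PartialOrder A] [StarOrderedRing A]
    {H : Type*} [NormedAddCommGroup H] [NormedSpace ℂ H] [SMul Aᵐᵒᵖ H]
    [CStarModuleRight A H] [CompleteSpace H]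
    -- a bounded `A`-linear map
    (T : H →L[ℂ] H) (hTmod : ∀ (a : A) (x : H), T (x <• a) = T x <• a)
    -- a (not necessarily bounded) `A`-linear map satisfying the inequality with constant `k`
    (T' : H →ₗ[ℂ] H) (hT'mod : ∀ (a : A) (x : H), T' (x <• a) = T' x <• a)
    (k : ℝ) (hk : 0 ≤ k)
    (hT' : ∀ x : H, inner (𝕜 := A) (T' x) (T' x) ≤ k • inner (𝕜 := A) x x) :
    (∃ k₀ : ℝ, 0 ≤ k₀ ∧ ∀ x : H,
        inner (𝕜 := A) (T x) (T x) ≤ k₀ • inner (𝕜 := A) x x) ∧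
    (∀ x : H, ‖T' x‖ ^ 2 ≤ k * ‖x‖ ^ 2) := by
  refine ⟨⟨‖T‖ ^ 2, by positivity, fun x => stmt17' T hTmod x⟩, ?_⟩
  intro x
  rw [cr_norm_sq_eq (A := A), cr_norm_sq_eq (A := A)]
  calc ‖inner (𝕜 := A) (T' x) (T' x)‖
      ≤ ‖k • inner (𝕜 := A) x x‖ :=
        CStarAlgebra.norm_le_norm_of_nonneg_of_le cr_inner_self_nonneg (hT' x)
    _ = k * ‖inner (𝕜 := A) x x‖ := by
        rw [norm_smul, Real.norm_of_nonneg hk]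
end
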